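/- Ordering of wave speeds: for g > 0, h₁, h₂ > 0, 0 ≤ r < 1, the external eigenvalue magnitude exceeds the internal one: √(g h₁(1+α₊)) ≥ √(g h₁(1+α₋)), with equality only if h₂ = 0 or r-degenerate cases; moreover g h₁(1+α₊) ≥ g·max(h₁,h₂) and g h₁(1+α₋) ≤ g·min(h₁,h₂). -/

import Mathlib

theorem stmt_19 (g h₁ h₂ r : ℝ) (hg : 0 < g) (hh₁ : 0 < h₁) (hh₂ : 0 < h₂)
    (hr0 : 0 ≤ r) (hr1 : r < 1) :
    let γ : ℝ := h₂ / h₁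
    let αp : ℝ := (1/2) * (γ - 1 + Real.sqrt ((γ-1)^2 + 4*r*γ))
    let αm : ℝ := (1/2) * (γ - 1 - Real.sqrt ((γ-1)^2 + 4*r*γ))
    Real.sqrt (g*h₁*(1 + αp)) ≥ Real.sqrt (g*h₁*(1 + αm)) ∧
    g*h₁*(1 + αp) ≥ g * max h₁ h₂ ∧
    g*h₁*(1 + αm) ≤ g * min h₁ h₂ := by
  intro γ αp αm
  have hne : h₁ ≠ 0 := ne_of_gt hh₁
  set s : ℝ := Real.sqrt ((γ-1)^2 + 4*r*γ) with hs
  have hs0 : 0 ≤ s := Real.sqrt_nonneg _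
  have key : |h₂ - h₁| ≤ h₁ * s := by
    have h1 : h₁ * s = Real.sqrt (h₁^2 * ((γ-1)^2 + 4*r*γ)) := by
      rw [Real.sqrt_mul (sq_nonneg h₁), Real.sqrt_sq hh₁.le]
    have h2 : h₁^2 * ((γ-1)^2 + 4*r*γ) = (h₂ - h₁)^2 + 4*r*h₁*h₂ := by
      simp only [γ]; field_simp
    have h3 : Real.sqrt ((h₂ - h₁)^2) ≤ Real.sqrt ((h₂ - h₁)^2 + 4*r*h₁*h₂) := by
      apply Real.sqrt_le_sqrt; nlinarith [mul_nonneg (mul_nonneg hr0 hh₁.le) hh₂.le]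
    rw [Real.sqrt_sq_eq_abs] at h3
    rw [h1, h2]; exact h3
  have hγ : h₁ * γ = h₂ := by simp only [γ]; field_simp
  have hm : g*h₁*(1 + αm) ≤ g*h₁*(1 + αp) := by
    simp only [αm, αp]
    nlinarith [mul_pos hg hh₁]
  refine ⟨Real.sqrt_le_sqrt hm, ?_, ?_⟩
  · rcases le_total h₁ h₂ with h | h
    · rw [max_eq_right h]
      simp only [αp]
      rw [abs_of_nonneg (by linarith)] at key
      nlinarith
    · rw [max_eq_left h]
      simp only [αp]
      rw [abs_of_nonpos (by linarith)] at key
      nlinarith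
  · rcases le_total h₁ h₂ with h | h
    · rw [min_eq_left h]
      simp only [αm]
      rw [abs_of_nonneg (by linarith)] at key
      nlinarith
    · rw [min_eq_right h]
      simp only [αm]
      rw [abs_of_nonpos (by linarith)] at key
      nlinarith
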